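/- Let h ∈ 𝓡 be a differential polynomial depending only on the variables v_{x^α} with α ≥ 1 (in particular not on v itself), let g := δh/δv_x, and for a direction m ∈ {2, …, N} define a := Σ_{α≥0} v_{x^α t_m} · (δh/δv_{x^{α+1}}) (a finite sum). Then the identity D_m(h) + D_x(g)·v_{t_m} = D_x(a) holds in 𝓡. -/
import Mathlib


open MvPolynomial

noncomputable section

/-- The ring `𝓡` of differential polynomials of a field `v` in independent variables
`t_1, …, t_N`: the polynomial ring over `ℝ` in commuting variables `v_I` indexed by
multi-indices `I : Fin N → ℕ`. -/
abbrev DiffPoly (N : ℕ) := MvPolynomial (Fin N → ℕ) ℝ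

/-- The total derivative `D_m`, determined by `D_m (v_I) = v_{I + e_m}`. -/
noncomputable def totalDeriv {N : ℕ} (m : Fin N) :
    Derivation ℝ (DiffPoly N) (DiffPoly N) :=
  MvPolynomial.mkDerivation ℝ fun I => X (I + Pi.single m 1)

/-- The x-variational derivative `δf/δv_I = Σ_α (−1)^α D_x^α (∂f/∂v_{I+α·e_x})`,
where `x` is the coordinate direction playing the role of `t_1`. -/
noncomputable def varDeriv {N : ℕ} (x : Fin N) (I : Fin N → ℕ) (f : DiffPoly N) :
    DiffPoly N :=
  ∑ᶠ α : ℕ, (-1 : ℝ) ^ α • (fun p => totalDeriv x p)^[α] (pderiv (I + α • Pi.single x 1) f)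

namespace Aux

variable {N : ℕ} (x m : Fin N)

lemma totalDeriv_X (I : Fin N → ℕ) :
    totalDeriv m (X I : DiffPoly N) = X (I + Pi.single m 1) :=
  mkDerivation_X _ _ _

lemma iter_zero (α : ℕ) : (fun p => totalDeriv x p)^[α] (0 : DiffPoly N) = 0 := by
  induction α with
  | zero => rfl
  | succ n ih => rw [Function.iterate_succ_apply, map_zero, ih]

/-- A degree bound. -/
def bnd (f : DiffPoly N) : ℕ := (f.vars.sup fun J => J x) + 1

lemma pderiv_bnd (f : DiffPoly N) (J : Fin N → ℕ) (hJ : bnd x f ≤ J x) :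
    pderiv J f = 0 := by
  apply pderiv_eq_zero_of_notMem_vars
  intro hmem
  have h2 : J x ≤ f.vars.sup fun J => J x := Finset.le_sup (f := fun J : Fin N → ℕ => J x) hmem
  have h3 : bnd x f = (f.vars.sup fun J => J x) + 1 := rfl
  rw [h3] at hJ
  exact Nat.not_succ_le_self _ (le_trans hJ h2)

lemma single_apply (α : ℕ) : (α • Pi.single x 1 : Fin N → ℕ) x = α := by
  simp [Pi.smul_apply, Pi.single_eq_same]

lemma varDeriv_eq_sum (f : DiffPoly N) (I : Fin N → ℕ) (n : ℕ)
    (hn : ∀ α, n ≤ α → pderiv (I + α • Pi.single x 1) f = 0) :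
    varDeriv x I f = ∑ α ∈ Finset.range n,
      (-1 : ℝ) ^ α • (fun p => totalDeriv x p)^[α] (pderiv (I + α • Pi.single x 1) f) := by
  apply finsum_eq_sum_of_support_subset
  intro α hα
  simp only [Function.mem_support] at hα
  simp only [Finset.coe_range, Set.mem_Iio]
  by_contra hc
  push_neg at hc
  rw [hn α hc, iter_zero, smul_zero] at hα
  exact hα rfl

lemma varDeriv_eq_zero (f : DiffPoly N) (I : Fin N → ℕ) (hI : bnd x f ≤ I x) :
    varDeriv x I f = 0 := by
  rw [varDeriv_eq_sum x f I 0, Finset.sum_range_zero]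
  intro α _
  apply pderiv_bnd x
  simp only [Pi.add_apply, single_apply]
  omega

lemma recursion (f : DiffPoly N) (I : Fin N → ℕ) :
    totalDeriv x (varDeriv x (I + Pi.single x 1) f) = pderiv I f - varDeriv x I f := by
  set n := bnd x f with hn
  have h1 : ∀ α, n ≤ α → pderiv (I + Pi.single x 1 + α • Pi.single x 1) f = 0 := by
    intro α hα
    apply pderiv_bnd x
    simp only [Pi.add_apply, single_apply, Pi.single_eq_same]
    omega
  have h2 : ∀ α, n + 1 ≤ α → pderiv (I + α • Pi.single x 1) f = 0 := by
    intro α hα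
    apply pderiv_bnd x
    simp only [Pi.add_apply, single_apply]
    omega
  rw [varDeriv_eq_sum x f _ n h1, varDeriv_eq_sum x f I (n+1) h2, map_sum,
    Finset.sum_range_succ']
  have key : ∀ α : ℕ, I + Pi.single x 1 + α • Pi.single x 1 = I + (α + 1) • Pi.single x 1 := by
    intro α
    rw [succ_nsmul]
    abel
  simp only [key]
  simp only [pow_zero, one_smul, Function.iterate_zero, id_eq, zero_smul, add_zero]
  rw [sub_add_eq_sub_sub, sub_sub_cancel_left, ← Finset.sum_neg_distrib]
  apply Finset.sum_congr rfl
  intro α _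
  rw [Derivation.map_smul]
  have hit : totalDeriv x ((fun p => totalDeriv x p)^[α]
      (pderiv (I + (α + 1) • Pi.single x 1) f))
      = (fun p => totalDeriv x p)^[α + 1] (pderiv (I + (α + 1) • Pi.single x 1) f) :=
    (Function.iterate_succ_apply' _ _ _).symm
  rw [hit, pow_succ, mul_neg_one, neg_smul, neg_neg]

lemma smul_nsmul_ne (α β : ℕ) (h : α ≠ β) :
    (α • Pi.single x 1 : Fin N → ℕ) ≠ β • Pi.single x 1 := by
  intro hc
  apply h
  have := congrFun hc x
  simpa [single_apply] using this

lemma chain_sum (f : DiffPoly N) (n : ℕ) (hnf : bnd x f ≤ n) :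
    (∑ᶠ α : ℕ, X (α • Pi.single x 1 + Pi.single m 1) * pderiv (α • Pi.single x 1) f)
      = ∑ α ∈ Finset.range n,
        X (α • Pi.single x 1 + Pi.single m 1) * pderiv (α • Pi.single x 1) f := by
  apply finsum_eq_sum_of_support_subset
  intro α hα
  simp only [Function.mem_support] at hα
  simp only [Finset.coe_range, Set.mem_Iio]
  by_contra hc
  push_neg at hc
  rw [pderiv_bnd x f _ (by simp only [single_apply]; omega), mul_zero] at hα
  exact hα rfl

section dep

variable (h : DiffPoly N)
  (hdep : h ∈ Algebra.adjoin ℝ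
    {p : DiffPoly N | ∃ α : ℕ, 1 ≤ α ∧ p = X (α • Pi.single x 1)})

include hdep

lemma pderiv_vanish (J : Fin N → ℕ) (hJ : ∀ α : ℕ, 1 ≤ α → J ≠ α • Pi.single x 1) :
    pderiv J h = 0 := by
  induction hdep using Algebra.adjoin_induction with
  | mem p hp =>
    obtain ⟨α, hα, rfl⟩ := hp
    exact pderiv_X_of_ne (hJ α hα).symm
  | algebraMap r => exact pderiv_C
  | add p q hp hq ihp ihq => rw [map_add, ihp, ihq, add_zero]
  | mul p q hp hq ihp ihq => rw [pderiv_mul, ihp, ihq, zero_mul, mul_zero, add_zero]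

lemma totalDeriv_m_eq :
    totalDeriv m h = ∑ᶠ α : ℕ,
      X (α • Pi.single x 1 + Pi.single m 1) * pderiv (α • Pi.single x 1) h := by
  induction hdep using Algebra.adjoin_induction with
  | mem p hp =>
    obtain ⟨β, hβ, rfl⟩ := hp
    rw [totalDeriv_X,
      finsum_eq_single _ β (fun α hα => by
        rw [pderiv_X_of_ne (smul_nsmul_ne x β α (Ne.symm hα)), mul_zero]),
      pderiv_X_self, mul_one]
  | algebraMap r =>
    rw [Derivation.map_algebraMap]
    simp [MvPolynomial.algebraMap_eq]
  | add p q hp hq ihp ihq =>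
    set n := max (bnd x p) (max (bnd x q) (bnd x (p + q))) with hn
    rw [chain_sum x m (p + q) n (by omega), map_add, ihp, ihq,
      chain_sum x m p n (by omega), chain_sum x m q n (by omega),
      ← Finset.sum_add_distrib]
    apply Finset.sum_congr rfl
    intro α _
    rw [map_add, mul_add]
  | mul p q hp hq ihp ihq =>
    set n := max (bnd x p) (max (bnd x q) (bnd x (p * q))) with hn
    rw [chain_sum x m (p * q) n (by omega), Derivation.leibniz, smul_eq_mul, smul_eq_mul,
      ihp, ihq, chain_sum x m p n (by omega), chain_sum x m q n (by omega),
      Finset.mul_sum, Finset.mul_sum, ← Finset.sum_add_distrib]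
    apply Finset.sum_congr rfl
    intro α _
    rw [pderiv_mul]
    ring

end dep

end Aux

/-- for `h` depending only on `v_{x^α}`, `α ≥ 1`, with `g := δh/δv_x` and
`a := Σ_α v_{x^α t_m}·(δh/δv_{x^{α+1}})`, one has `D_m(h) + D_x(g)·v_{t_m} = D_x(a)`. -/
theorem stmt_10 (N : ℕ) (hN : 2 ≤ N) (x : Fin N) (hx : x = ⟨0, by omega⟩)
    (h : DiffPoly N)
    (hdep : h ∈ Algebra.adjoin ℝ
      {p : DiffPoly N | ∃ α : ℕ, 1 ≤ α ∧ p = X (α • Pi.single x 1)})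
    (m : Fin N) (hm : m ≠ x) :
    totalDeriv m h + totalDeriv x (varDeriv x (Pi.single x 1) h) * X (Pi.single m 1)
      = totalDeriv x (∑ᶠ α : ℕ,
          X (α • Pi.single x 1 + Pi.single m 1) * varDeriv x ((α + 1) • Pi.single x 1) h) := by
  classical
  set n := Aux.bnd x h with hn
  set G : ℕ → DiffPoly N :=
    fun β => X (β • Pi.single x 1 + Pi.single m 1) * varDeriv x (β • Pi.single x 1) h with hG
  -- collapse the `a` finsum
  have ha : (∑ᶠ α : ℕ,
      X (α • Pi.single x 1 + Pi.single m 1) * varDeriv x ((α + 1) • Pi.single x 1) h)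
      = ∑ α ∈ Finset.range n,
        X (α • Pi.single x 1 + Pi.single m 1) * varDeriv x ((α + 1) • Pi.single x 1) h := by
    apply finsum_eq_sum_of_support_subset
    intro α hα
    simp only [Function.mem_support] at hα
    simp only [Finset.coe_range, Set.mem_Iio]
    by_contra hc
    push_neg at hc
    rw [Aux.varDeriv_eq_zero x h _ (by rw [Aux.single_apply]; omega), mul_zero] at hα
    exact hα rfl
  rw [ha, map_sum]
  -- rewrite each RHS term with Leibniz and the recursion
  have hterm : ∀ α : ℕ,
      totalDeriv x (X (α • Pi.single x 1 + Pi.single m 1) *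
          varDeriv x ((α + 1) • Pi.single x 1) h)
        = (G (α + 1) - G α) + X (α • Pi.single x 1 + Pi.single m 1) *
            pderiv (α • Pi.single x 1) h := by
    intro α
    simp only [hG]
    rw [Derivation.leibniz, smul_eq_mul, smul_eq_mul]
    rw [show ((α + 1) • Pi.single x 1 : Fin N → ℕ) = α • Pi.single x 1 + Pi.single x 1 from
      succ_nsmul _ _]
    rw [Aux.recursion, Aux.totalDeriv_X]
    rw [show (α • Pi.single x 1 + Pi.single m 1 + Pi.single x 1 : Fin N → ℕ)
      = α • Pi.single x 1 + Pi.single x 1 + Pi.single m 1 from by abel]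
    ring
  simp only [hterm]
  rw [Finset.sum_add_distrib, Finset.sum_range_sub G n]
  have hGn : G n = 0 := by
    simp only [hG]
    rw [Aux.varDeriv_eq_zero x h _ (by rw [Aux.single_apply]), mul_zero]
  have hG0 : G 0 = X (Pi.single m 1) * varDeriv x 0 h := by
    simp only [hG]
    rw [zero_smul, zero_add]
  rw [hGn, hG0]
  have hDm : totalDeriv m h = ∑ α ∈ Finset.range n,
      X (α • Pi.single x 1 + Pi.single m 1) * pderiv (α • Pi.single x 1) h := by
    rw [Aux.totalDeriv_m_eq x m h hdep, Aux.chain_sum x m h n (le_of_eq hn.symm)]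
  have hrec1 : totalDeriv x (varDeriv x (Pi.single x 1) h) = - varDeriv x 0 h := by
    have hr := Aux.recursion x h 0
    rw [zero_add] at hr
    rw [hr, Aux.pderiv_vanish x h hdep 0 (fun α hα hc => by
      have := congrFun hc x
      rw [Aux.single_apply] at this
      simp only [Pi.zero_apply] at this
      omega), zero_sub]
  rw [hDm, hrec1]
  ring
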